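/- Binary addition is computable by a bounded-depth boolean circuit built from ReLU units: there exists a function of the form x ↦ W₂·relu(W₁·(a, b) + b₁) + b₂, with W₁ having at most 8d rows, mapping the binary (little-endian) d-bit representations a, b ∈ {0,1}^d of two non-negative integers m, n with m + n < 2^{d+1} to the binary representation of m + n in {0,1}^{d+1}. -/

import Mathlib

open scoped Matrix

/-- The `k`-th binary digit of `n`, as a real number. -/
noncomputable def binDigit (n k : ℕ) : ℝ := if Nat.testBit n k then 1 else 0

lemma binDigit_nonneg (n k : ℕ) : 0 ≤ binDigit n k := by
  unfold binDigit; split <;> norm_num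

lemma binDigit_eq (n k : ℕ) : binDigit n k = ((n / 2^k % 2 : ℕ) : ℝ) := by
  unfold binDigit
  rw [Nat.testBit_eq_decide_div_mod_eq]
  have h : n / 2^k % 2 = 0 ∨ n / 2^k % 2 = 1 := by omega
  rcases h with h | h <;> simp [h]

lemma sum_binDigit (n j : ℕ) :
    ∑ k ∈ Finset.range j, binDigit n k * 2^k = ((n % 2^j : ℕ) : ℝ) := by
  induction j with
  | zero => simp [Nat.mod_one]
  | succ j ih =>
    rw [Finset.sum_range_succ, ih, binDigit_eq]
    have h : n % 2^(j+1) = n % 2^j + 2^j * (n / 2^j % 2) := by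
      rw [pow_succ]; exact Nat.mod_mul
    rw [h]; push_cast; ring

lemma digit_add_nat' (x y p : ℕ) (hp0 : 0 < p) :
    (x+y) / p % 2 + 2 * ((x % (p*2) + y % (p*2)) / (p*2))
      = x / p % 2 + y / p % 2 + (x % p + y % p) / p := by
  have ex : x % (p*2) = x % p + p * (x / p % 2) := Nat.mod_mul
  have ey : y % (p*2) = y % p + p * (y / p % 2) := Nat.mod_mul
  have es : (x+y) % (p*2) = (x+y) % p + p * ((x+y) / p % 2) := Nat.mod_mul
  have e1 : (x % p + y % p) = p * ((x % p + y % p) / p) + (x+y) % p := by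
    have h1 := Nat.div_add_mod (x % p + y % p) p
    have h2 : (x + y) % p = (x % p + y % p) % p := by rw [Nat.add_mod]
    omega
  have e2 : (x % (p*2) + y % (p*2)) = (p*2) * ((x % (p*2) + y % (p*2)) / (p*2)) + (x+y) % (p*2) := by
    have h1 := Nat.div_add_mod (x % (p*2) + y % (p*2)) (p*2)
    have h2 : (x + y) % (p*2) = (x % (p*2) + y % (p*2)) % (p*2) := by rw [Nat.add_mod]
    omega
  have hbx : x / p % 2 = 0 ∨ x / p % 2 = 1 := by omega
  have hby : y / p % 2 = 0 ∨ y / p % 2 = 1 := by omega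
  have hbs : (x+y) / p % 2 = 0 ∨ (x+y) / p % 2 = 1 := by omega
  have hmx := Nat.mod_lt x hp0
  have hmy := Nat.mod_lt y hp0
  have hc1 : (x % p + y % p) / p = 0 ∨ (x % p + y % p) / p = 1 :=
    Nat.le_one_iff_eq_zero_or_eq_one.mp (Nat.lt_succ_iff.mp
      ((Nat.div_lt_iff_lt_mul hp0).2 (by omega)))
  have hmx2 := Nat.mod_lt x (show 0 < p*2 by omega)
  have hmy2 := Nat.mod_lt y (show 0 < p*2 by omega)
  have hc2 : (x % (p*2) + y % (p*2)) / (p*2) = 0 ∨ (x % (p*2) + y % (p*2)) / (p*2) = 1 :=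
    Nat.le_one_iff_eq_zero_or_eq_one.mp (Nat.lt_succ_iff.mp
      ((Nat.div_lt_iff_lt_mul (by omega)).2 (by omega)))
  rcases hbx with h1 | h1 <;> rcases hby with h2 | h2 <;> rcases hbs with h3 | h3 <;>
    rcases hc1 with h4 | h4 <;> rcases hc2 with h5 | h5 <;>
    simp only [h1, h2, h3, h4, h5] at ex ey es e1 e2 ⊢ <;> omega

lemma digit_add_real (x y j : ℕ) :
    binDigit (x+y) j = binDigit x j + binDigit y j
      + ((x % 2^j + y % 2^j) / 2^j : ℕ)
      - 2 * ((x % 2^(j+1) + y % 2^(j+1)) / 2^(j+1) : ℕ) := by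
  have h := digit_add_nat' x y (2^j) (Nat.pow_pos (by norm_num))
  have hpp : 2^(j+1) = 2^j * 2 := pow_succ 2 j
  rw [binDigit_eq, binDigit_eq, binDigit_eq, hpp]
  have := congrArg (fun n : ℕ => (n : ℝ)) h
  push_cast at this ⊢
  linarith

noncomputable def W1f (d : ℕ) (i k : ℕ) : ℝ :=
  if i < d then (if k = i ∨ k = i + d then 1 else 0)
  else if k % d < (i - d) % d + 1 then 2^(k % d) else 0

noncomputable def b1f (d : ℕ) (i : ℕ) : ℝ :=
  if i < d then 0
  else if i < 2*d then -(2^(i - d + 1)) + 1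
  else -(2^(i - 2*d + 1))

noncomputable def W2f (d : ℕ) (j i : ℕ) : ℝ :=
  if j < d then
    (if i = j then 1 else 0)
    + (if 0 < j then ((if i = d + j - 1 then (1:ℝ) else 0) - (if i = 2*d + j - 1 then 1 else 0)) else 0)
    - 2 * (if i = d + j then 1 else 0) + 2 * (if i = 2*d + j then 1 else 0)
  else (if i = 2*d - 1 then 1 else 0) - (if i = 3*d - 1 then 1 else 0)

lemma sum_indicator (n c : ℕ) (hc : c < n) (h : ℕ → ℝ) :
    ∑ i ∈ Finset.range n, (if i = c then (1:ℝ) else 0) * h i = h c := by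
  simp only [ite_mul, one_mul, zero_mul]
  rw [Finset.sum_ite_eq' (Finset.range n) c h]
  simp [hc]

lemma sum_if_lt {j d : ℕ} (hj : j ≤ d) (f : ℕ → ℝ) :
    ∑ k ∈ Finset.range d, (if k < j then f k else 0) = ∑ k ∈ Finset.range j, f k := by
  rw [← Finset.sum_subset (Finset.range_subset_range.mpr hj)
      (fun k _ hk => by rw [if_neg (by simp at hk ⊢; omega)])]
  exact Finset.sum_congr rfl fun k hk => if_pos (Finset.mem_range.mp hk)

lemma hidden_eval (d x y : ℕ) (hd : 0 < d) (i : Fin (3*d)) :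
    ((Matrix.of (fun (a : Fin (3*d)) (b : Fin (2*d)) => W1f d (a:ℕ) (b:ℕ))) *ᵥ
      (fun k : Fin (2*d) => if (k:ℕ) < d then binDigit x k else binDigit y ((k:ℕ)-d))) i
    = if (i:ℕ) < d then binDigit x i + binDigit y i
      else ((x % 2^(((i:ℕ)-d) % d + 1) + y % 2^(((i:ℕ)-d) % d + 1) : ℕ) : ℝ) := by
  have h1 : ((Matrix.of (fun (a : Fin (3*d)) (b : Fin (2*d)) => W1f d (a:ℕ) (b:ℕ))) *ᵥ
      (fun k : Fin (2*d) => if (k:ℕ) < d then binDigit x k else binDigit y ((k:ℕ)-d))) i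
      = ∑ k ∈ Finset.range (2*d),
          W1f d (i:ℕ) k * (if k < d then binDigit x k else binDigit y (k-d)) := by
    simp only [Matrix.mulVec, dotProduct, Matrix.of_apply]
    exact Fin.sum_univ_eq_sum_range
      (fun k => W1f d (i:ℕ) k * (if k < d then binDigit x k else binDigit y (k-d))) (2*d)
  rw [h1, two_mul, Finset.sum_range_add]
  by_cases hi : (i:ℕ) < d
  · rw [if_pos hi]
    have e1 : ∑ k ∈ Finset.range d,
        W1f d (i:ℕ) k * (if k < d then binDigit x k else binDigit y (k-d))
        = binDigit x i := by
      rw [Finset.sum_congr rfl (fun k hk => ?_), sum_indicator d (i:ℕ) hi (binDigit x)]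
      have hkd : k < d := Finset.mem_range.mp hk
      simp only [W1f, if_pos hi, if_pos hkd]
      by_cases hki : k = (i:ℕ)
      · rw [if_pos (Or.inl hki), if_pos hki]
      · rw [if_neg (by omega), if_neg hki]
    have e2 : ∑ k ∈ Finset.range d,
        W1f d (i:ℕ) (d+k) * (if d+k < d then binDigit x (d+k) else binDigit y ((d+k)-d))
        = binDigit y i := by
      rw [Finset.sum_congr rfl (fun k hk => ?_), sum_indicator d (i:ℕ) hi (binDigit y)]
      have hkd : k < d := Finset.mem_range.mp hk
      rw [if_neg (by omega), show d + k - d = k by omega]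
      simp only [W1f, if_pos hi]
      by_cases hki : k = (i:ℕ)
      · rw [if_pos (by omega), if_pos hki]
      · rw [if_neg (by omega), if_neg hki]
    rw [e1, e2]
  · rw [if_neg hi]
    have hi3 : (i:ℕ) < 3*d := i.isLt
    set j := (((i:ℕ)-d) % d + 1) with hjdef
    have hjd : j ≤ d := by have := Nat.mod_lt ((i:ℕ)-d) hd; omega
    have e1 : ∑ k ∈ Finset.range d,
        W1f d (i:ℕ) k * (if k < d then binDigit x k else binDigit y (k-d))
        = ((x % 2^j : ℕ) : ℝ) := by
      rw [Finset.sum_congr rfl (fun k hk => ?_), sum_if_lt hjd, sum_binDigit]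
      · have hkd : k < d := Finset.mem_range.mp hk
        simp only [W1f, if_neg hi, if_pos hkd, Nat.mod_eq_of_lt hkd, ite_mul, zero_mul]
        exact if_congr Iff.rfl (mul_comm _ _) rfl
    have e2 : ∑ k ∈ Finset.range d,
        W1f d (i:ℕ) (d+k) * (if d+k < d then binDigit x (d+k) else binDigit y ((d+k)-d))
        = ((y % 2^j : ℕ) : ℝ) := by
      rw [Finset.sum_congr rfl (fun k hk => ?_), sum_if_lt hjd, sum_binDigit]
      · have hkd : k < d := Finset.mem_range.mp hk
        have hmod : (d + k) % d = k := by rw [Nat.add_mod_left]; exact Nat.mod_eq_of_lt hkd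
        rw [if_neg (by omega), show d + k - d = k by omega]
        simp only [W1f, if_neg hi, hmod, ite_mul, zero_mul]
        exact if_congr Iff.rfl (mul_comm _ _) rfl
    rw [e1, e2]
    push_cast
    ring

lemma relu_diff_pow (L t : ℕ) (hL : L < 2*2^t) :
    max ((L:ℝ) - 2^t + 1) 0 - max ((L:ℝ) - 2^t) 0 = ((L / 2^t : ℕ) : ℝ) := by
  have hp : (0:ℕ) < 2^t := pow_pos (by norm_num) t
  have hc : ((2^t : ℕ) : ℝ) = (2:ℝ)^t := by push_cast; ring
  rcases lt_or_ge L (2^t) with h | h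
  · rw [Nat.div_eq_of_lt h, Nat.cast_zero]
    have h1 : (L:ℝ) + 1 ≤ (2:ℝ)^t := by
      have h2 : L + 1 ≤ 2^t := h
      calc (L:ℝ) + 1 = ((L + 1 : ℕ):ℝ) := by push_cast; ring
        _ ≤ ((2^t : ℕ):ℝ) := Nat.cast_le.2 h2
        _ = (2:ℝ)^t := hc
    rw [max_eq_right (by linarith), max_eq_right (by linarith)]; ring
  · have hdiv : L / 2^t = 1 := by
      have h1 : 1 ≤ L / 2^t := (Nat.le_div_iff_mul_le hp).2 (by omega)
      have h2 : L / 2^t < 2 := (Nat.div_lt_iff_lt_mul hp).2 (by omega)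
      omega
    rw [hdiv, Nat.cast_one]
    have h1 : (2:ℝ)^t ≤ (L:ℝ) := by rw [← hc]; exact Nat.cast_le.2 h
    rw [max_eq_left (by linarith), max_eq_left (by linarith)]; ring

noncomputable def Hr (d x y n : ℕ) : ℝ :=
  max ((if n < d then binDigit x n + binDigit y n
        else ((x % 2^((n-d) % d + 1) + y % 2^((n-d) % d + 1) : ℕ) : ℝ)) + b1f d n) 0

lemma Hr_pass (d x y n : ℕ) (hn : n < d) : Hr d x y n = binDigit x n + binDigit y n := by
  unfold Hr b1f
  rw [if_pos hn, if_pos hn, add_zero]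
  exact max_eq_left (add_nonneg (binDigit_nonneg _ _) (binDigit_nonneg _ _))

lemma Hr_plus (d x y t : ℕ) (h1 : 1 ≤ t) (h2 : t ≤ d) :
    Hr d x y (d + t - 1) = max (((x % 2^t + y % 2^t : ℕ) : ℝ) - 2^t + 1) 0 := by
  unfold Hr b1f
  rw [if_neg (by omega), if_neg (by omega), if_pos (by omega : d + t - 1 < 2*d)]
  rw [show d + t - 1 - d = t - 1 from by omega, Nat.mod_eq_of_lt (show t-1 < d by omega),
      show t - 1 + 1 = t from by omega]
  congr 1 <;> ring

lemma Hr_minus (d x y t : ℕ) (h1 : 1 ≤ t) (h2 : t ≤ d) :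
    Hr d x y (2*d + t - 1) = max (((x % 2^t + y % 2^t : ℕ) : ℝ) - 2^t) 0 := by
  unfold Hr b1f
  rw [if_neg (by omega), if_neg (by omega), if_neg (by omega)]
  rw [show 2*d + t - 1 - d = d + (t-1) from by omega]
  rw [Nat.add_mod_left]
  rw [Nat.mod_eq_of_lt (show t-1 < d by omega)]
  rw [show t - 1 + 1 = t from by omega]
  rw [show 2*d + t - 1 - 2*d + 1 = t from by omega]
  congr 1 <;> ring

lemma Hr_carry (d x y t : ℕ) (h1 : 1 ≤ t) (h2 : t ≤ d) :
    Hr d x y (d + t - 1) - Hr d x y (2*d + t - 1)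
      = (((x % 2^t + y % 2^t) / 2^t : ℕ) : ℝ) := by
  rw [Hr_plus d x y t h1 h2, Hr_minus d x y t h1 h2]
  have hp : (0:ℕ) < 2^t := pow_pos (by norm_num) t
  have hL : x % 2^t + y % 2^t < 2*2^t := by
    have := Nat.mod_lt x hp; have := Nat.mod_lt y hp; omega
  exact relu_diff_pow (x % 2^t + y % 2^t) t hL

/-- A one-hidden-layer ReLU network with at most `8d` hidden units computing
binary addition of two `d`-bit numbers (little-endian digits), output in `d+1` bits. -/
theorem relu_network_binary_addition (d : ℕ) :
    ∃ m : ℕ, m ≤ 8 * d ∧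
    ∃ (W₁ : Matrix (Fin m) (Fin (2 * d)) ℝ) (W₂ : Matrix (Fin (d + 1)) (Fin m) ℝ)
      (b₁ : Fin m → ℝ) (b₂ : Fin (d + 1) → ℝ),
      ∀ x y : ℕ, x < 2 ^ d → y < 2 ^ d → x + y < 2 ^ (d + 1) →
        (W₂ *ᵥ (fun i => max ((W₁ *ᵥ (fun k : Fin (2 * d) =>
            if (k : ℕ) < d then binDigit x k else binDigit y ((k : ℕ) - d))) i + b₁ i) 0)
          + b₂) = fun j : Fin (d + 1) => binDigit (x + y) j := by
  rcases Nat.eq_zero_or_pos d with hd | hd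
  · subst hd
    refine ⟨0, by omega, 0, 0, 0, 0, fun x y hx hy hxy => funext fun j => ?_⟩
    have hx0 : x = 0 := by simpa using hx
    have hy0 : y = 0 := by simpa using hy
    subst hx0; subst hy0
    simp [Matrix.mulVec, dotProduct, binDigit, Nat.zero_testBit]
  · refine ⟨3*d, by omega,
      Matrix.of (fun (a : Fin (3*d)) (b : Fin (2*d)) => W1f d (a:ℕ) (b:ℕ)),
      Matrix.of (fun (a : Fin (d+1)) (b : Fin (3*d)) => W2f d (a:ℕ) (b:ℕ)),
      (fun i : Fin (3*d) => b1f d (i:ℕ)), 0, fun x y hx hy hxy => funext fun j => ?_⟩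
    have hsum : ((Matrix.of (fun (a : Fin (d+1)) (b : Fin (3*d)) => W2f d (a:ℕ) (b:ℕ))) *ᵥ
        (fun i : Fin (3*d) => max (((Matrix.of (fun (a : Fin (3*d)) (b : Fin (2*d)) =>
          W1f d (a:ℕ) (b:ℕ))) *ᵥ (fun k : Fin (2 * d) =>
            if (k : ℕ) < d then binDigit x k else binDigit y ((k : ℕ) - d))) i + b1f d (i:ℕ)) 0)
        + (0 : Fin (d+1) → ℝ)) j
        = ∑ i ∈ Finset.range (3*d), W2f d (j:ℕ) i * Hr d x y i := by
      simp only [Pi.add_apply, Pi.zero_apply, add_zero, Matrix.mulVec, dotProduct,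
        Matrix.of_apply]
      rw [Finset.sum_congr rfl (fun i _ => ?_)]
      · exact Fin.sum_univ_eq_sum_range (fun i => W2f d (j:ℕ) i * Hr d x y i) (3*d)
      · show W2f d (j:ℕ) (i:ℕ) * _ = W2f d (j:ℕ) (i:ℕ) * Hr d x y (i:ℕ)
        congr 1
        have h := hidden_eval d x y hd i
        simp only [Matrix.mulVec, dotProduct, Matrix.of_apply] at h ⊢
        rw [h]
        rfl
    rw [hsum]
    rcases lt_or_ge (j:ℕ) d with hjd | hjd
    · by_cases hj0 : 0 < (j:ℕ)
      · have expand : ∀ i0, W2f d (j:ℕ) i0 * Hr d x y i0 =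
            (if i0 = (j:ℕ) then (1:ℝ) else 0) * Hr d x y i0
            + ((if i0 = d + (j:ℕ) - 1 then (1:ℝ) else 0) * Hr d x y i0
              - (if i0 = 2*d + (j:ℕ) - 1 then (1:ℝ) else 0) * Hr d x y i0)
            - 2 * ((if i0 = d + (j:ℕ) then (1:ℝ) else 0) * Hr d x y i0)
            + 2 * ((if i0 = 2*d + (j:ℕ) then (1:ℝ) else 0) * Hr d x y i0) := fun i0 => by
          simp only [W2f, if_pos hjd, if_pos hj0]; ring
        rw [Finset.sum_congr rfl (fun i0 _ => expand i0)]
        rw [Finset.sum_add_distrib, Finset.sum_sub_distrib, Finset.sum_add_distrib,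
          Finset.sum_sub_distrib, ← Finset.mul_sum, ← Finset.mul_sum]
        rw [sum_indicator _ _ (by omega) _, sum_indicator _ _ (by omega) _,
          sum_indicator _ _ (by omega) _, sum_indicator _ _ (by omega) _,
          sum_indicator _ _ (by omega) _]
        have hc1 := Hr_carry d x y (j:ℕ) hj0 (by omega)
        have hc2 := Hr_carry d x y ((j:ℕ)+1) (by omega) (by omega)
        rw [show d + ((j:ℕ)+1) - 1 = d + (j:ℕ) from by omega,
          show 2*d + ((j:ℕ)+1) - 1 = 2*d + (j:ℕ) from by omega] at hc2
        rw [Hr_pass d x y (j:ℕ) hjd]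
        rw [digit_add_real x y (j:ℕ)]
        linarith [hc1, hc2]
      · have hj0' : (j:ℕ) = 0 := by omega
        have expand : ∀ i0, W2f d (j:ℕ) i0 * Hr d x y i0 =
            (if i0 = (j:ℕ) then (1:ℝ) else 0) * Hr d x y i0
            - 2 * ((if i0 = d + (j:ℕ) then (1:ℝ) else 0) * Hr d x y i0)
            + 2 * ((if i0 = 2*d + (j:ℕ) then (1:ℝ) else 0) * Hr d x y i0) := fun i0 => by
          simp only [W2f, if_pos hjd, if_neg hj0]; ring
        rw [Finset.sum_congr rfl (fun i0 _ => expand i0)]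
        rw [Finset.sum_add_distrib, Finset.sum_sub_distrib, ← Finset.mul_sum, ← Finset.mul_sum]
        rw [sum_indicator _ _ (by omega) _, sum_indicator _ _ (by omega) _,
          sum_indicator _ _ (by omega) _]
        have hc2 := Hr_carry d x y ((j:ℕ)+1) (by omega) (by omega)
        rw [show d + ((j:ℕ)+1) - 1 = d + (j:ℕ) from by omega,
          show 2*d + ((j:ℕ)+1) - 1 = 2*d + (j:ℕ) from by omega] at hc2
        rw [Hr_pass d x y (j:ℕ) hjd]
        rw [digit_add_real x y (j:ℕ)]
        have hz : x % 2^(j:ℕ) + y % 2^(j:ℕ) = 0 := by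
          rw [hj0']; simp [Nat.mod_one]
        rw [hz]
        simp only [Nat.zero_div, Nat.cast_zero]
        linarith [hc2]
    · have hjd' : (j:ℕ) = d := by have := j.isLt; omega
      have expand : ∀ i0, W2f d (j:ℕ) i0 * Hr d x y i0 =
          (if i0 = 2*d - 1 then (1:ℝ) else 0) * Hr d x y i0
          - (if i0 = 3*d - 1 then (1:ℝ) else 0) * Hr d x y i0 := fun i0 => by
        simp only [W2f, if_neg (by omega : ¬ (j:ℕ) < d)]; ring
      rw [Finset.sum_congr rfl (fun i0 _ => expand i0)]
      rw [Finset.sum_sub_distrib]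
      rw [sum_indicator _ _ (by omega) _, sum_indicator _ _ (by omega) _]
      have hc := Hr_carry d x y d (by omega) le_rfl
      rw [show d + d - 1 = 2*d - 1 from by omega,
        show 2*d + d - 1 = 3*d - 1 from by omega] at hc
      rw [hc, hjd']
      have hpow : (0:ℕ) < 2^d := pow_pos (by norm_num) d
      have hkey : (x+y) / 2^d % 2 = (x % 2^d + y % 2^d) / 2^d := by
        rw [Nat.mod_eq_of_lt hx, Nat.mod_eq_of_lt hy]
        have hlt : (x+y)/2^d < 2 := (Nat.div_lt_iff_lt_mul hpow).2 (by
          have : 2^(d+1) = 2^d * 2 := pow_succ 2 d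
          omega)
        exact Nat.mod_eq_of_lt hlt
      rw [binDigit_eq, hkey]
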